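/- Let G be a finite group and p a prime dividing |G|. If the commuting graph Γ_p on the set of elements of G of order p is connected, then the Sylow p-subgroups of G are non-cyclic or G has a nontrivial normal p-subgroup (O_p(G) ≠ 1). -/

import Mathlib

open SimpleGraph

/-- The commuting graph on a subset `X` of a group `G`: vertices are the elements of `X`,
and two distinct vertices are adjacent iff they commute. -/
def commGraph {G : Type*} [Group G] (X : Set G) : SimpleGraph X where
  Adj a b := a ≠ b ∧ (a : G) * (b : G) = (b : G) * (a : G)
  symm := ⟨fun a b h => ⟨h.1.symm, h.2.symm⟩⟩
  loopless := ⟨fun a h => h.1 rfl⟩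

/-- The connected component of `x` in the commuting graph on `X`, viewed as a subset of `G`. -/
def compSet {G : Type*} [Group G] (X : Set G) (x : G) (hx : x ∈ X) : Set G :=
  {y : G | ∃ hy : y ∈ X, (commGraph X).Reachable ⟨x, hx⟩ ⟨y, hy⟩}

/-- The stabilizer `H_x` in `G` of the connected component of `x` in the commuting graph on `X`,
under the conjugation action. -/
def conjStab {G : Type*} [Group G] (X : Set G) (x : G) (hx : x ∈ X) : Set G :=
  {g : G | (fun y => g⁻¹ * y * g) '' compSet X x hx = compSet X x hx}

/-- In a finite cyclic group, if `a` and `b` both have prime order `p`, then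
`b ∈ ⟨a⟩` (uniqueness of the subgroup of order `p`). -/
lemma mem_zpowers_of_orderOf_eq {Q : Type*} [Group Q] [Finite Q] [IsCyclic Q] {p : ℕ}
    (hp : p.Prime) {a b : Q} (ha : orderOf a = p) (hb : orderOf b = p) :
    b ∈ Subgroup.zpowers a := by
  classical
  have : Fintype Q := Fintype.ofFinite Q
  by_contra hmem
  have hcount := IsCyclic.card_pow_eq_one_le (α := Q) (n := p) hp.pos
  set s : Finset Q := Set.toFinset (Subgroup.zpowers a : Set Q) with hs
  have hscard : s.card = p := by
    rw [hs, Set.toFinset_card]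
    rw [← ha]
    exact Nat.card_zpowers a ▸ (Nat.card_eq_fintype_card (α := (Subgroup.zpowers a : Set Q))).symm
  have hsub : insert b s ⊆ Finset.univ.filter fun q : Q => q ^ p = 1 := by
    intro q hq
    rw [Finset.mem_insert] at hq
    rcases hq with rfl | hq
    · simp [Finset.mem_filter, ← hb, pow_orderOf_eq_one]
    · rw [hs, Set.mem_toFinset] at hq
      obtain ⟨k, rfl⟩ := hq
      simp only [Finset.mem_filter, Finset.mem_univ, true_and]
      rw [← zpow_natCast, ← zpow_mul, mul_comm, zpow_mul, zpow_natCast, ← ha,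
        pow_orderOf_eq_one, one_zpow]
  have hb' : b ∉ s := by
    rw [hs, Set.mem_toFinset]; exact hmem
  have : p + 1 ≤ p := by
    calc p + 1 = (insert b s).card := by rw [Finset.card_insert_of_notMem hb', hscard]
    _ ≤ (Finset.univ.filter fun q : Q => q ^ p = 1).card := Finset.card_le_card hsub
    _ ≤ p := hcount
  omega

lemma mem_zpowers_of_commute {G : Type*} [Group G] [Finite G] {p : ℕ} (hp : p.Prime)
    (hcyc : ∀ Q : Sylow p G, IsCyclic ↥(Q : Subgroup G)) {x y : G}
    (hx : orderOf x = p) (hy : orderOf y = p) (hc : x * y = y * x) :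
    y ∈ Subgroup.zpowers x := by
  classical
  set H := Subgroup.closure ({x, y} : Set G) with hH
  -- every element of H is of the form x^i * y^j
  have hform : ∀ g ∈ H, ∃ i j : ℤ, g = x ^ i * y ^ j := by
    intro g hg
    have hcomm : Commute x y := hc
    refine Subgroup.closure_induction ?_ ?_ ?_ ?_ hg
    · intro z hz
      rcases hz with rfl | hz
      · exact ⟨1, 0, by simp⟩
      · rcases hz with rfl
        exact ⟨0, 1, by simp⟩
    · exact ⟨0, 0, by simp⟩
    · rintro a b _ _ ⟨i, j, rfl⟩ ⟨k, l, rfl⟩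
      refine ⟨i + k, j + l, ?_⟩
      have h1 : Commute (y ^ j) (x ^ k) := (hcomm.symm.zpow_zpow j k)
      rw [zpow_add, zpow_add]
      calc x ^ i * y ^ j * (x ^ k * y ^ l) = x ^ i * (y ^ j * x ^ k) * y ^ l := by group
      _ = x ^ i * (x ^ k * y ^ j) * y ^ l := by rw [h1]
      _ = x ^ i * x ^ k * (y ^ j * y ^ l) := by group
    · rintro a _ ⟨i, j, rfl⟩
      refine ⟨-i, -j, ?_⟩
      have h1 : Commute (x ^ (-i)) (y ^ (-j)) := (hcomm.zpow_zpow _ _)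
      rw [mul_inv_rev, ← zpow_neg, ← zpow_neg, h1]
  -- H is a p-group
  have hpg : IsPGroup p H := by
    intro g
    refine ⟨1, ?_⟩
    obtain ⟨i, j, hij⟩ := hform g g.2
    have : ((g : G)) ^ (p ^ 1) = 1 := by
      rw [hij, pow_one]
      have h1 : Commute (x ^ i) (y ^ j) := (Commute.zpow_zpow hc i j)
      rw [h1.mul_pow]
      rw [← zpow_natCast (x ^ i), ← zpow_natCast (y ^ j), ← zpow_mul, ← zpow_mul,
        mul_comm i, mul_comm j, zpow_mul, zpow_mul, zpow_natCast, zpow_natCast,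
        ← hx, pow_orderOf_eq_one]
      rw [hx, ← hy, pow_orderOf_eq_one]
      simp
    exact Subtype.ext (by simpa using this)
  obtain ⟨Q, hQ⟩ := hpg.exists_le_sylow
  have hxQ : x ∈ (Q : Subgroup G) :=
    hQ (Subgroup.subset_closure (by simp))
  have hyQ : y ∈ (Q : Subgroup G) :=
    hQ (Subgroup.subset_closure (by simp))
  haveI : IsCyclic ↥(Q : Subgroup G) := hcyc Q
  have ha : orderOf (⟨x, hxQ⟩ : (Q : Subgroup G)) = p := by
    rw [Subgroup.orderOf_mk]; exact hx
  have hb : orderOf (⟨y, hyQ⟩ : (Q : Subgroup G)) = p := by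
    rw [Subgroup.orderOf_mk]; exact hy
  obtain ⟨k, hk⟩ := mem_zpowers_of_orderOf_eq hp ha hb
  refine ⟨k, ?_⟩
  have := congrArg (Subtype.val) hk
  simpa using this

lemma zpowers_eq_of_commute {G : Type*} [Group G] [Finite G] {p : ℕ} (hp : p.Prime)
    (hcyc : ∀ Q : Sylow p G, IsCyclic ↥(Q : Subgroup G)) {x y : G}
    (hx : orderOf x = p) (hy : orderOf y = p) (hc : x * y = y * x) :
    Subgroup.zpowers x = Subgroup.zpowers y :=
  le_antisymm
    ((Subgroup.zpowers_le).mpr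
      (mem_zpowers_of_commute hp hcyc hy hx (by rw [hc])))
    ((Subgroup.zpowers_le).mpr (mem_zpowers_of_commute hp hcyc hx hy hc))

lemma zpowers_eq_of_reachable {G : Type*} [Group G] [Finite G] {p : ℕ} (hp : p.Prime)
    (hcyc : ∀ Q : Sylow p G, IsCyclic ↥(Q : Subgroup G))
    {u v : {x : G | orderOf x = p}}
    (h : (commGraph {x : G | orderOf x = p}).Reachable u v) :
    Subgroup.zpowers (u : G) = Subgroup.zpowers (v : G) := by
  obtain ⟨w⟩ := h
  induction w with
  | nil => rfl
  | @cons a b c hab _ ih =>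
      exact (zpowers_eq_of_commute hp hcyc a.2 b.2 (And.right hab)).trans ih

lemma all_sylow_cyclic {G : Type*} [Group G] [Finite G] {p : ℕ} [Fact p.Prime]
    (P : Sylow p G) (h : IsCyclic ↥(P : Subgroup G)) (Q : Sylow p G) :
    IsCyclic ↥(Q : Subgroup G) := by
  obtain ⟨g, rfl⟩ := MulAction.exists_smul_eq G P Q
  haveI : IsCyclic ↥(P : Subgroup G) := h
  have e : ↥(P : Subgroup G) ≃* ↥((g • P : Sylow p G) : Subgroup G) :=
    Subgroup.equivSMul (MulAut.conj g) (P : Subgroup G)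
  exact isCyclic_of_surjective e.toMonoidHom e.surjective

/-- Let `G` be a finite group and `p` a prime dividing `|G|`. If the commuting graph on the
set of elements of `G` of order `p` is connected, then the Sylow `p`-subgroups of `G` are
non-cyclic, or `G` has a nontrivial normal `p`-subgroup (`O_p(G) ≠ 1`). -/
theorem sylow_not_cyclic_or_pCore_ne_bot_of_commGraph_connected
    {G : Type*} [Group G] [Finite G] (p : ℕ) (hp : p.Prime)
    (hdvd : p ∣ Nat.card G)
    (hconn : (commGraph {x : G | orderOf x = p}).Connected) :
    (∀ P : Sylow p G, ¬ IsCyclic ↥(P : Subgroup G)) ∨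
      ∃ N : Subgroup G, N.Normal ∧ IsPGroup p N ∧ N ≠ ⊥ := by
  haveI : Fact p.Prime := ⟨hp⟩
  by_cases hall : ∀ P : Sylow p G, ¬ IsCyclic ↥(P : Subgroup G)
  · exact Or.inl hall
  · right
    push_neg at hall
    obtain ⟨P, hP⟩ := hall
    have hcyc : ∀ Q : Sylow p G, IsCyclic ↥(Q : Subgroup G) := all_sylow_cyclic P hP
    obtain ⟨z, hz⟩ := exists_prime_orderOf_dvd_card' p hdvd
    have key : ∀ x : G, orderOf x = p → Subgroup.zpowers x = Subgroup.zpowers z := by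
      intro x hx
      have hxm : x ∈ {x : G | orderOf x = p} := hx
      have hzm : z ∈ {x : G | orderOf x = p} := hz
      exact zpowers_eq_of_reachable hp hcyc (hconn ⟨x, hxm⟩ ⟨z, hzm⟩)
    refine ⟨Subgroup.zpowers z, ?_, ?_, ?_⟩
    · constructor
      intro n hn g
      obtain ⟨k, hk⟩ := hn
      have hconj : orderOf (g * z * g⁻¹) = p := by
        have hsc : SemiconjBy g z (g * z * g⁻¹) := by
          unfold SemiconjBy; group
        rw [← hsc.orderOf_eq, hz]
      have h1 : (g * z * g⁻¹) ∈ Subgroup.zpowers z := by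
        rw [← key _ hconj]; exact Subgroup.mem_zpowers _
      have h2 : g * n * g⁻¹ = (g * z * g⁻¹) ^ k := by
        rw [← hk]; simp [ConjAct.toConjAct, conj_zpow]
      rw [h2]
      exact Subgroup.zpow_mem _ h1 k
    · exact IsPGroup.of_card (by rw [Nat.card_zpowers, hz, pow_one])
    · intro hbot
      rw [Subgroup.zpowers_eq_bot] at hbot
      rw [hbot, orderOf_one] at hz
      exact hp.one_lt.ne' hz.symm
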